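/- Let F be a linear ordered field equipped with its order topology such that F is Cauchy complete and has cofinality ω₀, and let X be a completely F-regular space. Then X is an almost P_F-space (every nonempty zero set Z(f) with f ∈ C(X,F) has nonempty interior in X) if and only if X is an almost P-space (every nonempty Gδ subset of X has nonempty interior in X). -/

import Mathlib

open Set

/-- `Pz a` : the intersection of all minimal prime ideals of `R` which contain `a`. -/
def Pz {R : Type*} [CommRing R] (a : R) : Set R :=
  ⋂ P ∈ {P : Ideal R | P ∈ minimalPrimes R ∧ a ∈ P}, (P : Set R)

/-- A proper ideal `I` is a `z°`-ideal if `Pz a ⊆ I` for every `a ∈ I`. -/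
def IsZoIdeal {R : Type*} [CommRing R] (I : Ideal R) : Prop :=
  I ≠ ⊤ ∧ ∀ a ∈ I, Pz a ⊆ (I : Set R)

/-- The zero set `Z(f)` of a continuous function `f`. -/
def ZSet {X F : Type*} [TopologicalSpace X] [TopologicalSpace F] [Zero F]
    (f : C(X, F)) : Set X := {x | f x = 0}

/-- `f` is bounded over `X` (i.e. `f ∈ B(X,F)`). -/
def BddF {X F : Type*} [TopologicalSpace X] [Field F] [LinearOrder F] [IsStrictOrderedRing F] [TopologicalSpace F]
    (f : C(X, F)) : Prop := ∃ l : F, 0 < l ∧ ∀ x, |f x| ≤ l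

/-- `X` is completely `F`-regular: Hausdorff, and points can be separated from closed
sets by bounded `F`-valued continuous functions. -/
def CompletelyFRegular (X F : Type*) [TopologicalSpace X] [Field F] [LinearOrder F] [IsStrictOrderedRing F]
    [TopologicalSpace F] : Prop :=
  T2Space X ∧ ∀ K : Set X, IsClosed K → ∀ x ∉ K, ∃ f : C(X, F),
    BddF f ∧ f x = 0 ∧ ∀ k ∈ K, f k = 1

/-- `A` is an intermediate ring: a subring of `C(X,F)` containing all of `B(X,F)`. -/
def IsIntermediate {X F : Type*} [TopologicalSpace X] [Field F] [LinearOrder F] [IsStrictOrderedRing F]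
    [TopologicalSpace F] [OrderTopology F] (A : Subring C(X, F)) : Prop :=
  ∀ f : C(X, F), BddF f → f ∈ A

/-- An ideal of closed sets in `X`: a nonempty family of closed sets, closed under
finite unions and under passing to closed subsets. -/
def IsIdealOfClosedSets {X : Type*} [TopologicalSpace X] (P : Set (Set X)) : Prop :=
  P.Nonempty ∧ (∀ A ∈ P, IsClosed A) ∧ (∀ A ∈ P, ∀ B ∈ P, A ∪ B ∈ P) ∧
    ∀ C : Set X, IsClosed C → ∀ A ∈ P, C ⊆ A → C ∈ P

/-- `X` is an almost `P_F`-space: every nonempty zero set has nonempty interior. -/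
def AlmostPF (X F : Type*) [TopologicalSpace X] [Field F] [LinearOrder F] [IsStrictOrderedRing F]
    [TopologicalSpace F] : Prop :=
  ∀ f : C(X, F), (ZSet f).Nonempty → (interior (ZSet f)).Nonempty


/-- F is Cauchy complete: every Cauchy sequence in F converges in the order topology. -/
def CauchyCompleteField (F : Type*) [Field F] [LinearOrder F] [IsStrictOrderedRing F] [TopologicalSpace F] : Prop :=
  ∀ a : ℕ → F, (∀ ε : F, 0 < ε → ∃ N : ℕ, ∀ m ≥ N, ∀ n ≥ N, |a m - a n| < ε) →
    ∃ l : F, Filter.Tendsto a Filter.atTop (nhds l)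

/-- F has cofinality ω₀: a countable sequence is cofinal in F. -/
def CofinalityOmega (F : Type*) [Preorder F] : Prop :=
  ∃ s : ℕ → F, ∀ x : F, ∃ n : ℕ, x ≤ s n

/-- A rapidly decreasing positive sequence below `e`. -/
def deltaSeq {F : Type*} [Field F] [LinearOrder F] [IsStrictOrderedRing F] (e : ℕ → F) : ℕ → F
  | 0 => min (e 0) 1
  | n + 1 => min (e (n + 1)) (deltaSeq e n / 2)

section DS
variable {F : Type*} [Field F] [LinearOrder F] [IsStrictOrderedRing F] (e : ℕ → F)

lemma deltaSeq_pos (hepos : ∀ n, 0 < e n) : ∀ n, 0 < deltaSeq e n := by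
  intro n
  induction n with
  | zero => exact lt_min (hepos 0) one_pos
  | succ n ih => exact lt_min (hepos _) (by positivity)

lemma deltaSeq_le_e : ∀ n, deltaSeq e n ≤ e n := by
  intro n; cases n <;> exact min_le_left _ _

lemma deltaSeq_half (n : ℕ) : deltaSeq e (n + 1) ≤ deltaSeq e n / 2 :=
  min_le_right _ _

lemma deltaSeq_anti (hepos : ∀ n, 0 < e n) : ∀ n m : ℕ, n ≤ m → deltaSeq e m ≤ deltaSeq e n := by
  intro n m h
  induction m, h using Nat.le_induction with
  | base => exact le_rfl
  | succ m hm ih =>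
      calc deltaSeq e (m + 1) ≤ deltaSeq e m / 2 := deltaSeq_half e m
        _ ≤ deltaSeq e m := by
            have := (deltaSeq_pos e hepos m).le; linarith
        _ ≤ deltaSeq e n := ih

lemma deltaSeq_sum (n : ℕ) : ∀ m : ℕ, n ≤ m →
    (∑ k ∈ Finset.Ico n m, deltaSeq e k) + 2 * deltaSeq e m ≤ 2 * deltaSeq e n := by
  intro m h
  induction m, h using Nat.le_induction with
  | base => simp
  | succ m hm ih =>
      rw [Finset.sum_Ico_succ_top hm]
      have h1 := deltaSeq_half e m
      linarith

end DS

open Filter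

/-- For Cauchy complete F of cofinality ω₀: X is an almost P_F-space iff X is an
almost P-space (every nonempty Gδ set has nonempty interior). -/
theorem stmt10 {X F : Type*} [TopologicalSpace X] [Field F] [LinearOrder F] [IsStrictOrderedRing F]
    [TopologicalSpace F] [OrderTopology F]
    (hcc : CauchyCompleteField F) (hcf : CofinalityOmega F)
    (hX : CompletelyFRegular X F) :
    AlmostPF X F ↔ ∀ G : Set X, IsGδ G → G.Nonempty → (interior G).Nonempty := by
  obtain ⟨s, hs⟩ := hcf
  set e : ℕ → F := fun n => (max (s n) 1)⁻¹ with he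
  have hepos : ∀ n, 0 < e n := fun n => inv_pos.2 (lt_of_lt_of_le one_pos (le_max_right _ _))
  have hecoin : ∀ ε : F, 0 < ε → ∃ n, e n ≤ ε := by
    intro ε hε
    obtain ⟨n, hn⟩ := hs ε⁻¹
    refine ⟨n, ?_⟩
    have h1 : ε⁻¹ ≤ max (s n) 1 := le_trans hn (le_max_left _ _)
    have h2 := inv_anti₀ (inv_pos.2 hε) h1
    simpa using h2
  set δ : ℕ → F := deltaSeq e with hδdef
  have hδpos := deltaSeq_pos e hepos
  constructor
  · intro hPF G hG hGne
    obtain ⟨x, hx⟩ := hGne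
    obtain ⟨U, hUopen, rfl⟩ := isGδ_iff_eq_iInter_nat.1 hG
    have hsep : ∀ n : ℕ, ∃ f : C(X, F), f x = 0 ∧ ∀ y, y ∉ U n → f y = 1 := by
      intro n
      obtain ⟨f, -, hf0, hf1⟩ := hX.2 (U n)ᶜ (hUopen n).isClosed_compl x
        (fun hc => hc (mem_iInter.1 hx n))
      exact ⟨f, hf0, fun y hy => hf1 y hy⟩
    choose f hf0 hf1 using hsep
    set g : ℕ → X → F := fun n y => δ n * min |f n y| 1 with hg
    have hg0 : ∀ (n : ℕ) y, 0 ≤ g n y := fun n y =>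
      mul_nonneg (hδpos n).le (le_min (abs_nonneg _) zero_le_one)
    have hgδ : ∀ (n : ℕ) y, g n y ≤ δ n := fun n y => by
      calc g n y ≤ δ n * 1 := mul_le_mul_of_nonneg_left (min_le_right _ _) (hδpos n).le
        _ = δ n := mul_one _
    set S : ℕ → X → F := fun N y => ∑ k ∈ Finset.range N, g k y with hS
    have hScont : ∀ N, Continuous (S N) := fun N =>
      continuous_finset_sum _ fun k _ =>
        continuous_const.mul (((f k).continuous.abs).min continuous_const)
    have hSmono : ∀ y, Monotone fun N => S N y := fun y =>
      monotone_nat_of_le_succ fun N => by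
        simp only [hS, Finset.sum_range_succ]
        exact le_add_of_nonneg_right (hg0 N y)
    have hSdiff : ∀ y, ∀ n m : ℕ, n ≤ m → S m y - S n y ≤ 2 * δ n := by
      intro y n m hnm
      have h1 : ∑ k ∈ Finset.Ico n m, g k y = S m y - S n y :=
        Finset.sum_Ico_eq_sub _ hnm
      have h2 : ∑ k ∈ Finset.Ico n m, g k y ≤ ∑ k ∈ Finset.Ico n m, δ k :=
        Finset.sum_le_sum fun k _ => hgδ k y
      have h3 := deltaSeq_sum e n m hnm
      have h4 := hδpos m
      rw [h1] at h2
      linarith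
    have hlim : ∀ y, ∃ l, Filter.Tendsto (fun N => S N y) atTop (nhds l) := by
      intro y
      apply hcc
      intro ε hε
      obtain ⟨n₀, hn₀⟩ := hecoin (ε / 3) (by positivity)
      have key : ∀ m n : ℕ, n₀ ≤ n → n ≤ m → S m y - S n y < ε := by
        intro m n hn hnm
        have h1 := hSdiff y n m hnm
        have h2 := deltaSeq_anti e hepos n₀ n hn
        have h3 := deltaSeq_le_e e n₀
        linarith
      refine ⟨n₀, fun m hm n hn => ?_⟩
      rcases le_total n m with h | h
      · rw [abs_of_nonneg (sub_nonneg.2 (hSmono y h))]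
        exact key m n hn h
      · rw [abs_of_nonpos (sub_nonpos.2 (hSmono y h)), neg_sub]
        exact key n m hm h
    choose h hh using hlim
    have hub : ∀ y (n : ℕ), S n y ≤ h y := fun y n =>
      ge_of_tendsto (hh y) (eventually_atTop.2 ⟨n, fun m hm => hSmono y hm⟩)
    have htail : ∀ y (n : ℕ), h y ≤ S n y + 2 * δ n := fun y n =>
      le_of_tendsto (hh y) (eventually_atTop.2 ⟨n, fun m hm => by
        have := hSdiff y n m hm; linarith⟩)
    have hcont : Continuous h := by
      rw [continuous_iff_continuousAt]
      intro y₀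
      rw [ContinuousAt, LinearOrderedAddCommGroup.tendsto_nhds]
      intro ε hε
      obtain ⟨n₀, hn₀⟩ := hecoin (ε / 7) (by positivity)
      have hδn₀ : δ n₀ ≤ ε / 7 := le_trans (deltaSeq_le_e e n₀) hn₀
      have hS0 := (hScont n₀).continuousAt (x := y₀)
      rw [ContinuousAt, LinearOrderedAddCommGroup.tendsto_nhds] at hS0
      filter_upwards [hS0 (ε / 7) (by positivity)] with y hy
      obtain ⟨hy1, hy2⟩ := abs_lt.1 hy
      have h1 := hub y n₀
      have h2 := htail y n₀
      have h3 := hub y₀ n₀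
      have h4 := htail y₀ n₀
      rw [abs_lt]
      constructor <;> linarith
    have hxZ : h x = 0 := by
      have hz : ∀ N, S N x = 0 := by
        intro N
        apply Finset.sum_eq_zero
        intro k _
        simp [hg, hf0 k]
      have ht : Filter.Tendsto (fun N => S N x) atTop (nhds 0) := by
        simp only [hz]; exact tendsto_const_nhds
      exact tendsto_nhds_unique (hh x) ht
    have hZsub : ZSet (⟨h, hcont⟩ : C(X, F)) ⊆ ⋂ n, U n := by
      intro y hy
      have hy0 : h y = 0 := hy
      rw [mem_iInter]
      intro n
      by_contra hyn
      have h1 : g n y = δ n := by simp [hg, hf1 n y hyn]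
      have h2 : δ n ≤ S (n + 1) y := by
        rw [← h1]
        exact Finset.single_le_sum (fun k _ => hg0 k y) (Finset.self_mem_range_succ n)
      have h3 := hub y (n + 1)
      have h4 := hδpos n
      linarith
    obtain ⟨z, hz⟩ := hPF ⟨h, hcont⟩ ⟨x, hxZ⟩
    exact ⟨z, interior_mono hZsub hz⟩
  · intro hG f hfne
    refine hG (ZSet f) ?_ hfne
    rw [isGδ_iff_eq_iInter_nat]
    refine ⟨fun n => {y | |f y| < e n}, fun n => isOpen_lt (f.continuous.abs) continuous_const, ?_⟩
    ext y
    simp only [ZSet, mem_setOf_eq, mem_iInter]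
    constructor
    · intro h0 n; rw [h0]; simpa using hepos n
    · intro hall
      by_contra hne
      obtain ⟨n, hn⟩ := hecoin |f y| (abs_pos.2 hne)
      exact absurd (hall n) (not_lt.2 hn)
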